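/- A full triangle functor between triangulated categories which sends non-zero objects to non-zero objects is faithful. -/

import Mathlib

/-!
STATEMENT 9.
A full triangle functor between (pre)triangulated categories which sends
non-zero objects to non-zero objects is faithful.
-/

open CategoryTheory CategoryTheory.Limits CategoryTheory.Pretriangulated

theorem full_triangle_functor_faithful
    {C D : Type*} [Category C] [Category D]
    [HasZeroObject C] [HasZeroObject D]
    [Preadditive C] [Preadditive D]
    [HasShift C ℤ] [HasShift D ℤ]
    [∀ n : ℤ, (shiftFunctor C n).Additive] [∀ n : ℤ, (shiftFunctor D n).Additive]
    [Pretriangulated C] [Pretriangulated D]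
    (F : C ⥤ D) [F.CommShift ℤ] [F.IsTriangulated] [F.Full]
    (h : ∀ X : C, ¬ IsZero X → ¬ IsZero (F.obj X)) :
    F.Faithful := by
  -- It suffices to show that `F.map f = 0` implies `f = 0`.
  have key : ∀ {X Y : C} (f : X ⟶ Y), F.map f = 0 → f = 0 := by
    intro X Y f hf
    -- Complete `f` to a distinguished triangle `X ⟶ Y ⟶ Z ⟶ X⟦1⟧`.
    obtain ⟨Z, g, k, hT⟩ := distinguished_cocone_triangle f
    -- The image triangle is distinguished and has first morphism zero,
    -- so `F.map g` admits a retraction `r`.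
    have hT' := F.map_distinguished _ hT
    obtain ⟨r, hr⟩ := Triangle.yoneda_exact₂ _ hT' (𝟙 (F.obj Y))
      (by exact (Category.comp_id _).trans hf)
    change F.obj Z ⟶ F.obj Y at r
    change 𝟙 (F.obj Y) = F.map g ≫ r at hr
    -- Lift the retraction through `F` by fullness.
    obtain ⟨r', rfl⟩ := F.map_surjective r
    -- Consider `c = g ≫ r' : Y ⟶ Y`; then `F.map c = 𝟙`.
    have hc : F.map (g ≫ r') = 𝟙 (F.obj Y) := by rw [F.map_comp, ← hr]
    -- Complete `c` to a distinguished triangle; its image has an iso first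
    -- morphism, hence zero third object.
    obtain ⟨W, p, q, hW⟩ := distinguished_cocone_triangle (g ≫ r')
    have hFW : IsZero (F.obj W) := by
      have := Triangle.isZero₃_of_isIso₁ _ (F.map_distinguished _ hW)
        (by change IsIso (F.map (g ≫ r')); rw [hc]; infer_instance)
      exact this
    -- Hence `W` is zero, so `g ≫ r'` is an isomorphism.
    have hWzero : IsZero W := by
      by_contra hne
      exact h W hne hFW
    have : IsIso (g ≫ r') := (Triangle.isZero₃_iff_isIso₁ _ hW).1 hWzero
    -- Then `g` is a (split) mono, and `f ≫ g = 0` gives `f = 0`.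
    have hmono : Mono g := by
      constructor
      intro A a b hab
      have : a ≫ (g ≫ r') = b ≫ (g ≫ r') := by
        rw [← Category.assoc, ← Category.assoc, hab]
      exact (cancel_mono (g ≫ r')).1 this
    have hfg : f ≫ g = 0 := comp_distTriang_mor_zero₁₂ _ hT
    rw [← cancel_mono g, hfg, zero_comp]
  exact ⟨fun {X Y f₁ f₂} hf => by
    have : F.map (f₁ - f₂) = 0 := by rw [F.map_sub, hf, sub_self]
    have := key _ this
    rwa [sub_eq_zero] at this⟩
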